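/- For real x with 0 < |x| < 1, ∫₀^π θ sin³θ / (1 − x² cos² θ) dθ = (π/x²) · (1 + ((x² − 1)/x) · artanh(x)). -/

import Mathlib

open Real

theorem stmt_7 (x : ℝ) (hx : |x| < 1) (hx0 : x ≠ 0) :
    ∫ θ in (0:ℝ)..Real.pi, θ * Real.sin θ ^ 3 / (1 - x ^ 2 * Real.cos θ ^ 2)
      = Real.pi / x ^ 2 *
        (1 + (x ^ 2 - 1) / x * (1 / 2 * Real.log ((1 + x) / (1 - x)))) := by
  have hx2 : x ^ 2 < 1 := by nlinarith [abs_nonneg x, sq_abs x]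
  have hden : ∀ θ : ℝ, 0 < 1 - x ^ 2 * Real.cos θ ^ 2 := fun θ => by
    nlinarith [Real.cos_sq_le_one θ, sq_nonneg x, sq_nonneg (x * Real.cos θ)]
  have hbound : ∀ θ : ℝ, |x * Real.cos θ| < 1 := fun θ => by
    calc |x * Real.cos θ| = |x| * |Real.cos θ| := abs_mul _ _
    _ ≤ |x| * 1 := by gcongr; exact Real.abs_cos_le_one θ
    _ < 1 := by simpa using hx
  have hp : ∀ θ : ℝ, 0 < 1 + x * Real.cos θ := fun θ => by
    have := abs_lt.mp (hbound θ); linarith [this.1]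
  have hm : ∀ θ : ℝ, 0 < 1 - x * Real.cos θ := fun θ => by
    have := abs_lt.mp (hbound θ); linarith [this.2]
  set g : ℝ → ℝ := fun θ => Real.sin θ ^ 3 / (1 - x ^ 2 * Real.cos θ ^ 2) with hg
  have hgc : Continuous g := by
    apply Continuous.div (by continuity) (by continuity)
    exact fun θ => (hden θ).ne'
  set H : ℝ → ℝ := fun θ => -(Real.cos θ / x ^ 2 +
      (x ^ 2 - 1) / (2 * x ^ 3) *
        (Real.log (1 + x * Real.cos θ) - Real.log (1 - x * Real.cos θ))) with hHdef
  have hderiv : ∀ θ : ℝ, HasDerivAt H (g θ) θ := by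
    intro θ
    have hc : HasDerivAt Real.cos (-Real.sin θ) θ := Real.hasDerivAt_cos θ
    have h1 : HasDerivAt (fun t => 1 + x * Real.cos t) (x * -Real.sin θ) θ :=
      (hc.const_mul x).const_add 1
    have h2 : HasDerivAt (fun t => 1 - x * Real.cos t) (-(x * -Real.sin θ)) θ :=
      (hc.const_mul x).const_sub 1
    have hl1 := h1.log (hp θ).ne'
    have hl2 := h2.log (hm θ).ne'
    have hD := (((hc.div_const (x ^ 2)).add ((hl1.sub hl2).const_mul
        ((x ^ 2 - 1) / (2 * x ^ 3)))).neg)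
    refine hD.congr_deriv (Eq.symm ?_)
    have h3 : Real.sin θ ^ 3 = Real.sin θ * (1 - Real.cos θ ^ 2) := by
      rw [pow_succ, Real.sin_sq]; ring
    simp only [hg]
    rw [h3]
    have hx3 : x ^ 3 ≠ 0 := pow_ne_zero 3 hx0
    rw [show 1 - x ^ 2 * Real.cos θ ^ 2 = (1 + x * Real.cos θ) * (1 - x * Real.cos θ) by ring]
    field_simp [(hden θ).ne', (hp θ).ne', (hm θ).ne', show 1 + Real.cos θ * x ≠ 0 by rw [mul_comm]; exact (hp θ).ne', show 1 - Real.cos θ * x ≠ 0 by rw [mul_comm]; exact (hm θ).ne']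
    ring
  have hJ : ∫ θ in (0:ℝ)..Real.pi, g θ = H Real.pi - H 0 :=
    intervalIntegral.integral_eq_sub_of_hasDerivAt (fun t _ => hderiv t)
      (hgc.intervalIntegrable _ _)
  have hsym : ∫ θ in (0:ℝ)..Real.pi, (Real.pi - θ) * g θ
      = ∫ θ in (0:ℝ)..Real.pi, θ * g θ := by
    have h := intervalIntegral.integral_comp_sub_left (a := 0) (b := Real.pi)
      (fun θ => θ * g θ) Real.pi
    simp only [sub_zero, sub_self] at h
    rw [← h]
    apply intervalIntegral.integral_congr
    intro t ht
    simp only [hg, Real.sin_pi_sub, Real.cos_pi_sub]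
    ring_nf
  have hint1 : IntervalIntegrable (fun θ => θ * g θ) MeasureTheory.volume 0 Real.pi :=
    (continuous_id.mul hgc).intervalIntegrable _ _
  have hint2 : IntervalIntegrable (fun θ => (Real.pi - θ) * g θ) MeasureTheory.volume 0 Real.pi :=
    ((continuous_const.sub continuous_id).mul hgc).intervalIntegrable _ _
  have hkey : (∫ θ in (0:ℝ)..Real.pi, θ * g θ) * 2
      = Real.pi * ∫ θ in (0:ℝ)..Real.pi, g θ := by
    have hadd := intervalIntegral.integral_add hint1 hint2
    have hcongr : ∫ θ in (0:ℝ)..Real.pi, (θ * g θ + (Real.pi - θ) * g θ)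
        = ∫ θ in (0:ℝ)..Real.pi, Real.pi * g θ := by
      apply intervalIntegral.integral_congr
      intro t ht; ring
    rw [hcongr, intervalIntegral.integral_const_mul] at hadd
    rw [hsym] at hadd
    linarith [hadd]
  have hLHS : ∫ θ in (0:ℝ)..Real.pi, θ * Real.sin θ ^ 3 / (1 - x ^ 2 * Real.cos θ ^ 2)
      = ∫ θ in (0:ℝ)..Real.pi, θ * g θ := by
    apply intervalIntegral.integral_congr
    intro t ht
    simp only [hg]
    ring
  rw [hLHS]
  have hIval : (∫ θ in (0:ℝ)..Real.pi, θ * g θ) = Real.pi * (H Real.pi - H 0) / 2 := by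
    rw [← hJ]; linarith [hkey]
  rw [hIval]
  -- now evaluate H π, H 0
  have h1x : (0:ℝ) < 1 + x := by have := abs_lt.mp hx; linarith [this.1]
  have h2x : (0:ℝ) < 1 - x := by have := abs_lt.mp hx; linarith [this.2]
  have hlog : Real.log ((1 + x) / (1 - x)) = Real.log (1 + x) - Real.log (1 - x) :=
    Real.log_div h1x.ne' h2x.ne'
  simp only [hHdef, Real.cos_pi, Real.cos_zero, hlog]
  have e1 : 1 + x * (-1 : ℝ) = 1 - x := by ring
  have e2 : 1 - x * (-1 : ℝ) = 1 + x := by ring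
  have e3 : x * (1 : ℝ) = x := by ring
  rw [e1, e2]
  rw [mul_one]
  have hx3 : x ^ 3 ≠ 0 := pow_ne_zero 3 hx0
  have hx2' : x ^ 2 ≠ 0 := pow_ne_zero 2 hx0
  field_simp
  ring
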